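/- If a ∈ ℝ_{>0}^n is log-majorized by b ∈ ℝ_{>0}^n, then a is weakly majorized by b, i.e., each partial sum of the decreasing rearrangement of a is at most the corresponding partial sum for b. -/

import Mathlib

/-- Decreasing rearrangement of a finite real vector. -/
noncomputable def sortDesc {n : ℕ} (a : Fin n → ℝ) : Fin n → ℝ :=
  fun i => a (Tuple.sort a i.rev)

/-- Sum of the `k` largest entries of `a`. -/
noncomputable def topSum {n : ℕ} (a : Fin n → ℝ) (k : ℕ) : ℝ :=
  ∑ i : Fin n, if (i : ℕ) < k then sortDesc a i else 0

/-- Product of the `k` largest entries of `a`. -/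
noncomputable def topProd {n : ℕ} (a : Fin n → ℝ) (k : ℕ) : ℝ :=
  ∏ i : Fin n, if (i : ℕ) < k then sortDesc a i else 1

/-- `a ≺ b`: majorization of real vectors. -/
def Majorizes {n : ℕ} (a b : Fin n → ℝ) : Prop :=
  (∀ k : ℕ, k ≤ n → topSum a k ≤ topSum b k) ∧ ∑ i, a i = ∑ i, b i

/-- `a ≺_w b`: weak majorization of real vectors. -/
def WeakMajorizes {n : ℕ} (a b : Fin n → ℝ) : Prop :=
  ∀ k : ℕ, k ≤ n → topSum a k ≤ topSum b k

/-- `a ≺_{log} b`: log-majorization of positive vectors. -/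
def LogMajorizes {n : ℕ} (a b : Fin n → ℝ) : Prop :=
  (∀ k : ℕ, k ≤ n → topProd a k ≤ topProd b k) ∧ ∏ i, a i = ∏ i, b i

/-- Abel-summation style estimate: if `c` is nonincreasing and nonnegative on `[0,n]`,
`D 0 = 0` and `D` is nonnegative on `[0,n]`, then the "summation by parts" bound holds. -/
lemma abel_aux (c D : ℕ → ℝ) (n : ℕ) (hD0 : D 0 = 0)
    (hc : ∀ i ≤ n, 0 ≤ c i) (hmono : ∀ i, i + 1 ≤ n → c (i + 1) ≤ c i)
    (hD : ∀ j ≤ n, 0 ≤ D j) :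
    ∀ k ≤ n, c k * D k ≤ ∑ i ∈ Finset.range k, c i * (D (i + 1) - D i) := by
  intro k hk
  induction k with
  | zero => simp [hD0]
  | succ k ih =>
    have hk' : k ≤ n := Nat.le_of_succ_le hk
    have ih' := ih hk'
    rw [Finset.sum_range_succ]
    have h1 : c (k + 1) * D (k + 1) ≤ c k * D (k + 1) :=
      mul_le_mul_of_nonneg_right (hmono k hk) (hD _ hk)
    nlinarith [ih', hD (k+1) hk]

/-- Key numeric lemma over ℕ-indexed sequences: if `x` is positive and nonincreasing on
`[0,n)`, `y` is positive on `[0,n)`, and all partial products of `x` are at most those of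
`y`, then all partial sums of `x` are at most those of `y`. -/
lemma key_aux (x y : ℕ → ℝ) (n : ℕ)
    (hx : ∀ i < n, 0 < x i) (hy : ∀ i < n, 0 < y i)
    (hmono : ∀ i, i + 1 < n → x (i + 1) ≤ x i)
    (hprod : ∀ j ≤ n, ∏ i ∈ Finset.range j, x i ≤ ∏ i ∈ Finset.range j, y i) :
    ∀ k ≤ n, ∑ i ∈ Finset.range k, x i ≤ ∑ i ∈ Finset.range k, y i := by
  intro k hk
  set c : ℕ → ℝ := fun i => if i < n then x i else 0 with hc_def
  set D : ℕ → ℝ := fun j => ∑ i ∈ Finset.range j, (Real.log (y i) - Real.log (x i)) with hD_def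
  have hcpos : ∀ i ≤ n, 0 ≤ c i := by
    intro i hi
    simp only [hc_def]
    split
    · exact (hx i ‹_›).le
    · exact le_refl 0
  have hcmono : ∀ i, i + 1 ≤ n → c (i + 1) ≤ c i := by
    intro i hi
    simp only [hc_def]
    rcases lt_or_eq_of_le hi with h | h
    · rw [if_pos h, if_pos (by omega)]
      exact hmono i h
    · rw [if_neg (by omega), if_pos (by omega)]
      exact (hx i (by omega)).le
  have hDnn : ∀ j ≤ n, 0 ≤ D j := by
    intro j hj
    have hxne : ∀ i ∈ Finset.range j, x i ≠ 0 := fun i hi =>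
      (hx i (lt_of_lt_of_le (Finset.mem_range.mp hi) hj)).ne'
    have hyne : ∀ i ∈ Finset.range j, y i ≠ 0 := fun i hi =>
      (hy i (lt_of_lt_of_le (Finset.mem_range.mp hi) hj)).ne'
    have hxpos : 0 < ∏ i ∈ Finset.range j, x i :=
      Finset.prod_pos fun i hi => hx i (lt_of_lt_of_le (Finset.mem_range.mp hi) hj)
    have := Real.log_le_log hxpos (hprod j hj)
    rw [Real.log_prod hxne, Real.log_prod hyne] at this
    simp only [hD_def, Finset.sum_sub_distrib]
    linarith
  have habel := abel_aux c D n (by simp [hD_def]) hcpos hcmono hDnn k hk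
  -- pointwise convexity bound: y i - x i ≥ x i * (log y i - log x i) for i < n
  have hpt : ∀ i < n, c i * (D (i + 1) - D i) ≤ y i - x i := by
    intro i hi
    have hDd : D (i + 1) - D i = Real.log (y i) - Real.log (x i) := by
      simp only [hD_def, Finset.sum_range_succ]
      ring
    rw [hDd]
    simp only [hc_def, if_pos hi]
    have h1 : (Real.log (y i) - Real.log (x i)) + 1 ≤
        Real.exp (Real.log (y i) - Real.log (x i)) := Real.add_one_le_exp _
    have h2 : Real.exp (Real.log (y i) - Real.log (x i)) = y i / x i := by
      rw [Real.exp_sub, Real.exp_log (hy i hi), Real.exp_log (hx i hi)]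
    rw [h2] at h1
    have hxi := hx i hi
    have := mul_le_mul_of_nonneg_left h1 hxi.le
    rw [mul_div_cancel₀ _ hxi.ne'] at this
    nlinarith
  have hsum : ∑ i ∈ Finset.range k, c i * (D (i + 1) - D i) ≤
      ∑ i ∈ Finset.range k, (y i - x i) := by
    refine Finset.sum_le_sum fun i hi => hpt i ?_
    exact lt_of_lt_of_le (Finset.mem_range.mp hi) hk
  have h0 : 0 ≤ ∑ i ∈ Finset.range k, c i * (D (i + 1) - D i) := by
    refine le_trans ?_ habel
    exact mul_nonneg (hcpos k hk) (hDnn k hk)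
  rw [Finset.sum_sub_distrib] at hsum
  linarith

lemma sortDesc_anti {n : ℕ} (a : Fin n → ℝ) : Antitone (sortDesc a) := by
  intro i j hij
  exact Tuple.monotone_sort a (Fin.rev_le_rev.mpr hij)

lemma topSum_eq {n : ℕ} (a : Fin n → ℝ) (k : ℕ) (hk : k ≤ n) :
    topSum a k = ∑ i ∈ Finset.range k,
      (fun i => if h : i < n then sortDesc a ⟨i, h⟩ else 0) i := by
  set f : ℕ → ℝ := fun m => if m < k then (if h : m < n then sortDesc a ⟨m, h⟩ else 0) else 0
    with hf
  calc topSum a k = ∑ i : Fin n, f ↑i := by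
        refine Finset.sum_congr rfl fun i _ => ?_
        rcases i with ⟨i, hi⟩
        simp [hf, hi]
    _ = ∑ i ∈ Finset.range n, f i := Fin.sum_univ_eq_sum_range f n
    _ = ∑ i ∈ Finset.range k, (fun i => if h : i < n then sortDesc a ⟨i, h⟩ else 0) i := by
        rw [← Finset.sum_subset (Finset.range_mono hk)]
        · refine Finset.sum_congr rfl fun i hi => ?_
          simp [hf, Finset.mem_range.mp hi]
        · intro i _ hi
          simp only [hf]; rw [if_neg (by simpa using hi)]

lemma topProd_eq {n : ℕ} (a : Fin n → ℝ) (k : ℕ) (hk : k ≤ n) :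
    topProd a k = ∏ i ∈ Finset.range k,
      (fun i => if h : i < n then sortDesc a ⟨i, h⟩ else 0) i := by
  set f : ℕ → ℝ := fun m => if m < k then (if h : m < n then sortDesc a ⟨m, h⟩ else 0) else 1
    with hf
  calc topProd a k = ∏ i : Fin n, f ↑i := by
        refine Finset.prod_congr rfl fun i _ => ?_
        rcases i with ⟨i, hi⟩
        simp [hf, hi]
    _ = ∏ i ∈ Finset.range n, f i := Fin.prod_univ_eq_prod_range f n
    _ = ∏ i ∈ Finset.range k, (fun i => if h : i < n then sortDesc a ⟨i, h⟩ else 0) i := by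
        rw [← Finset.prod_subset (Finset.range_mono hk)]
        · refine Finset.prod_congr rfl fun i hi => ?_
          simp [hf, Finset.mem_range.mp hi]
        · intro i _ hi
          simp only [hf]; rw [if_neg (by simpa using hi)]

theorem stmt_2 {n : ℕ} (a b : Fin n → ℝ) (ha : ∀ i, 0 < a i) (hb : ∀ i, 0 < b i)
    (hmaj : LogMajorizes a b) : WeakMajorizes a b := by
  intro k hk
  set x : ℕ → ℝ := fun i => if h : i < n then sortDesc a ⟨i, h⟩ else 0 with hx_def
  set y : ℕ → ℝ := fun i => if h : i < n then sortDesc b ⟨i, h⟩ else 0 with hy_def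
  have hxpos : ∀ i < n, 0 < x i := by
    intro i hi; simp only [hx_def, dif_pos hi]; exact ha _
  have hypos : ∀ i < n, 0 < y i := by
    intro i hi; simp only [hy_def, dif_pos hi]; exact hb _
  have hmono : ∀ i, i + 1 < n → x (i + 1) ≤ x i := by
    intro i hi
    simp only [hx_def, dif_pos hi, dif_pos (Nat.lt_of_succ_lt hi)]
    exact sortDesc_anti a (by simp [Fin.le_def])
  have hprod : ∀ j ≤ n, ∏ i ∈ Finset.range j, x i ≤ ∏ i ∈ Finset.range j, y i := by
    intro j hj
    rw [← topProd_eq a j hj, ← topProd_eq b j hj]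
    exact hmaj.1 j hj
  have := key_aux x y n hxpos hypos hmono hprod k hk
  rw [topSum_eq a k hk, topSum_eq b k hk]
  exact this
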